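/- (Vertical intermediate-value selection) Let α ∈ (0,1], ϱ > 0, let I ⊆ ℝ be an interval containing 0 in its interior, and let γ : I → ℍ be a continuous curve with γ_0 = 0 satisfying [γ_t]ʰ ≤ ϱ|t|^{(1+α)/2} and |(γ_t)ᵛ + γ¹_t·0 − t| ≤ ϱ²|t|^{1+α} for all t ∈ I (i.e., |(γ_0⁻¹γ_t)ᵛ − t| ≤ ϱ²|t|^{1+α}). Then there exists δ₂ > 0 with [−δ₂, δ₂] ⊆ I such that for every δ ∈ (0, δ₂] there is ε₂ = ε₂(δ) > 0 with the property: for every x ∈ ℍ with d(0,x) < ε₂, there exists t = t(x) ∈ [−δ, δ] such that [γ_t⁻¹x]ᵛ ≤ [γ_t⁻¹x]ʰ. -/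

import Mathlib

open Set

abbrev Heis := ℝ × ℝ × ℝ

/-- Heisenberg group product. -/
def hmul (x y : Heis) : Heis :=
  (x.1 + y.1, x.2.1 + y.2.1, x.2.2 + y.2.2 + (x.1 * y.2.1 - x.2.1 * y.1))

/-- Heisenberg group inverse. -/
def hinv (x : Heis) : Heis := (-x.1, -x.2.1, -x.2.2)

/-- Intrinsic dilation. -/
def hdil (r : ℝ) (x : Heis) : Heis := (r * x.1, r * x.2.1, r ^ 2 * x.2.2)

/-- Horizontal components. -/
def hor (x : Heis) : ℝ × ℝ := (x.1, x.2.1)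

/-- Horizontal gauge. -/
noncomputable def gaugeH (x : Heis) : ℝ := Real.sqrt (x.1 ^ 2 + x.2.1 ^ 2)

/-- Vertical gauge. -/
noncomputable def gaugeV (x : Heis) : ℝ := Real.sqrt |x.2.2|

lemma cross_bound (a b u v : ℝ) :
    |a * v - b * u| ≤ Real.sqrt (a ^ 2 + b ^ 2) * Real.sqrt (u ^ 2 + v ^ 2) := by
  have h1 : (a * v - b * u) ^ 2 ≤ (a ^ 2 + b ^ 2) * (u ^ 2 + v ^ 2) := by
    nlinarith [sq_nonneg (a * u + b * v)]
  calc |a * v - b * u| = Real.sqrt ((a * v - b * u) ^ 2) := (Real.sqrt_sq_eq_abs _).symm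
    _ ≤ Real.sqrt ((a ^ 2 + b ^ 2) * (u ^ 2 + v ^ 2)) := Real.sqrt_le_sqrt h1
    _ = _ := Real.sqrt_mul (by positivity) _

/-- Vertical intermediate-value selection: for a continuous curve γ through 0
with horizontal increments of order |t|^{(1+α)/2} and vertical increments
close to t, every point x sufficiently close to 0 admits a time
t ∈ [-δ,δ] at which [γ_t⁻¹x]ᵛ ≤ [γ_t⁻¹x]ʰ. -/
theorem vertical_intermediate_value (α : ℝ) (hα : α ∈ Set.Ioc (0 : ℝ) 1)
    (ϱ : ℝ) (hϱ : 0 < ϱ) (I : Set ℝ) (hI : I.OrdConnected)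
    (h0 : (0 : ℝ) ∈ interior I)
    (γ : ℝ → Heis) (hγ : ContinuousOn γ I)
    (hγ0 : γ 0 = ((0 : ℝ), (0 : ℝ), (0 : ℝ)))
    (hhor : ∀ t ∈ I, gaugeH (γ t) ≤ ϱ * |t| ^ ((1 + α) / 2))
    (hvert : ∀ t ∈ I, |(γ t).2.2 - t| ≤ ϱ ^ 2 * |t| ^ (1 + α))
    (d : Heis → Heis → ℝ) (c : ℝ) (hc : 1 ≤ c)
    (hd : ∀ z : Heis,
      c⁻¹ * (gaugeH z + gaugeV z) ≤ d ((0 : ℝ), (0 : ℝ), (0 : ℝ)) z ∧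
      d ((0 : ℝ), (0 : ℝ), (0 : ℝ)) z ≤ c * (gaugeH z + gaugeV z)) :
    ∃ δ₂ > (0 : ℝ), Set.Icc (-δ₂) δ₂ ⊆ I ∧
      ∀ δ ∈ Set.Ioc (0 : ℝ) δ₂, ∃ ε₂ > (0 : ℝ), ∀ x : Heis,
        d ((0 : ℝ), (0 : ℝ), (0 : ℝ)) x < ε₂ →
        ∃ t ∈ Set.Icc (-δ) δ,
          gaugeV (hmul (hinv (γ t)) x) ≤ gaugeH (hmul (hinv (γ t)) x) := by
  obtain ⟨hα0, hα1⟩ := hα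
  have hc0 : (0 : ℝ) < c := lt_of_lt_of_le one_pos hc
  have hnh : I ∈ nhds (0 : ℝ) := mem_interior_iff_mem_nhds.mp h0
  obtain ⟨r, hr0, hball⟩ := Metric.mem_nhds_iff.mp hnh
  set A : ℝ := ((4 * ϱ ^ 2)⁻¹) ^ (1 / α) with hA
  have hApos : 0 < A := Real.rpow_pos_of_pos (by positivity) _
  set δ₂ : ℝ := min (r / 2) A with hδ₂def
  have hδ₂pos : 0 < δ₂ := lt_min (by linarith) hApos
  have hsub : Icc (-δ₂) δ₂ ⊆ I := by
    intro t ht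
    apply hball
    simp only [Metric.mem_ball, Real.dist_eq, sub_zero]
    have h1 : δ₂ ≤ r / 2 := min_le_left _ _
    rw [abs_lt]
    constructor <;> [linarith [ht.1]; linarith [ht.2]]
  refine ⟨δ₂, hδ₂pos, hsub, ?_⟩
  intro δ hδ
  obtain ⟨hδpos, hδle⟩ := hδ
  -- key exponent bound
  have hδα : δ ^ α ≤ (4 * ϱ ^ 2)⁻¹ := by
    have h1 : δ ≤ A := le_trans hδle (min_le_right _ _)
    have h2 : δ ^ α ≤ A ^ α := Real.rpow_le_rpow hδpos.le h1 hα0.le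
    have h3 : A ^ α = (4 * ϱ ^ 2)⁻¹ := by
      rw [hA, ← Real.rpow_mul (by positivity : (0:ℝ) ≤ (4 * ϱ ^ 2)⁻¹),
        one_div_mul_cancel hα0.ne', Real.rpow_one]
    linarith
  have hvertδ : ϱ ^ 2 * δ ^ (1 + α) ≤ δ / 4 := by
    have heq : δ ^ (1 + α) = δ * δ ^ α := by
      rw [Real.rpow_add hδpos, Real.rpow_one]
    rw [heq]
    have hkey : ϱ ^ 2 * (δ * (4 * ϱ ^ 2)⁻¹) = δ / 4 := by
      field_simp
    calc ϱ ^ 2 * (δ * δ ^ α) ≤ ϱ ^ 2 * (δ * (4 * ϱ ^ 2)⁻¹) := by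
          apply mul_le_mul_of_nonneg_left
            (mul_le_mul_of_nonneg_left hδα hδpos.le) (by positivity)
      _ = δ / 4 := hkey
  -- endpoints are in I
  have hδmem : δ ∈ I := hsub ⟨by linarith, hδle⟩
  have hδmem' : -δ ∈ I := hsub ⟨by linarith, by linarith⟩
  -- vertical estimates at the endpoints
  have habs : |δ| = δ := abs_of_pos hδpos
  have hvp : (3 : ℝ) / 4 * δ ≤ (γ δ).2.2 := by
    have h := hvert δ hδmem
    rw [habs] at h
    have := abs_le.mp h
    linarith [this.1, hvertδ]
  have hvm : (γ (-δ)).2.2 ≤ -(3 / 4 * δ) := by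
    have h := hvert (-δ) hδmem'
    rw [abs_neg, habs] at h
    have := abs_le.mp h
    linarith [this.2, hvertδ]
  -- horizontal bound at the endpoints
  set B : ℝ := ϱ * δ ^ ((1 + α) / 2) with hB
  have hBpos : 0 < B := by
    apply mul_pos hϱ (Real.rpow_pos_of_pos hδpos _)
  have hhorδ : ∀ t ∈ Icc (-δ) δ, gaugeH (γ t) ≤ B := by
    intro t ht
    have htI : t ∈ I := hsub ⟨by linarith [ht.1], by linarith [ht.2]⟩
    have h1 := hhor t htI
    have h2 : |t| ^ ((1 + α) / 2) ≤ δ ^ ((1 + α) / 2) := by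
      apply Real.rpow_le_rpow (abs_nonneg _) (abs_le.mpr ⟨ht.1, ht.2⟩) (by linarith)
    calc gaugeH (γ t) ≤ ϱ * |t| ^ ((1 + α) / 2) := h1
      _ ≤ B := by rw [hB]; exact mul_le_mul_of_nonneg_left h2 hϱ.le
  -- choose ε₂
  refine ⟨min (Real.sqrt (δ / 4) / c) (δ / (4 * c * (B + 1))), ?_, ?_⟩
  · apply lt_min
    · exact div_pos (Real.sqrt_pos.mpr (by linarith)) hc0
    · apply div_pos hδpos (by positivity)
  intro x hx
  set ε₂ : ℝ := min (Real.sqrt (δ / 4) / c) (δ / (4 * c * (B + 1))) with hε₂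
  -- bounds on x
  have hsum : gaugeH x + gaugeV x ≤ c * ε₂ := by
    have h1 : c⁻¹ * (gaugeH x + gaugeV x) < ε₂ := lt_of_le_of_lt (hd x).1 hx
    have h2 := mul_lt_mul_of_pos_left h1 hc0
    rw [← mul_assoc, mul_inv_cancel₀ hc0.ne', one_mul] at h2
    exact h2.le
  have hgHnn : 0 ≤ gaugeH x := Real.sqrt_nonneg _
  have hgVnn : 0 ≤ gaugeV x := Real.sqrt_nonneg _
  have hx3 : |x.2.2| ≤ δ / 4 := by
    have h1 : gaugeV x ≤ Real.sqrt (δ / 4) := by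
      have h2 : c * ε₂ ≤ c * (Real.sqrt (δ / 4) / c) :=
        mul_le_mul_of_nonneg_left (min_le_left _ _) hc0.le
      have h3 : c * (Real.sqrt (δ / 4) / c) = Real.sqrt (δ / 4) := by
        field_simp
      linarith
    calc |x.2.2| = gaugeV x ^ 2 := (Real.sq_sqrt (abs_nonneg _)).symm
      _ ≤ Real.sqrt (δ / 4) ^ 2 := by
          apply pow_le_pow_left₀ hgVnn h1
      _ = δ / 4 := Real.sq_sqrt (by linarith)
  have hgHx : gaugeH x ≤ δ / (4 * (B + 1)) := by
    have h2 : c * ε₂ ≤ c * (δ / (4 * c * (B + 1))) :=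
      mul_le_mul_of_nonneg_left (min_le_right _ _) hc0.le
    have h3 : c * (δ / (4 * c * (B + 1))) = δ / (4 * (B + 1)) := by
      field_simp
    linarith
  -- cross-term bound
  have hcross : ∀ t ∈ Icc (-δ) δ,
      |(γ t).1 * x.2.1 - (γ t).2.1 * x.1| ≤ δ / 4 := by
    intro t ht
    have h1 : |(γ t).1 * x.2.1 - (γ t).2.1 * x.1| ≤ gaugeH (γ t) * gaugeH x :=
      cross_bound _ _ _ _
    have h2 : gaugeH (γ t) * gaugeH x ≤ B * (δ / (4 * (B + 1))) := by
      apply mul_le_mul (hhorδ t ht) hgHx hgHnn hBpos.le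
    have h3 : B * (δ / (4 * (B + 1))) ≤ δ / 4 := by
      rw [← mul_div_assoc, div_le_div_iff₀ (by positivity) (by norm_num : (0:ℝ) < 4)]
      nlinarith [hδpos.le, hBpos.le]
    linarith
  -- the function for the IVT
  set f : ℝ → ℝ := fun t =>
    x.2.2 - (γ t).2.2 - ((γ t).1 * x.2.1 - (γ t).2.1 * x.1) with hf
  have hIccsub : Icc (-δ) δ ⊆ I := fun t ht =>
    hsub ⟨by linarith [ht.1], by linarith [ht.2]⟩
  have hγ' : ContinuousOn γ (Icc (-δ) δ) := hγ.mono hIccsub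
  have hfc : ContinuousOn f (Icc (-δ) δ) := by
    apply ContinuousOn.sub
    · exact continuousOn_const.sub hγ'.snd.snd
    · exact (hγ'.fst.mul continuousOn_const).sub (hγ'.snd.fst.mul continuousOn_const)
  have hfδ : f δ ≤ 0 := by
    have h1 := hcross δ ⟨by linarith, le_refl _⟩
    have h2 := abs_le.mp h1
    have h3 := abs_le.mp hx3
    simp only [hf]
    linarith [h2.1, h2.2, h3.1, h3.2, hvp]
  have hfmδ : 0 ≤ f (-δ) := by
    have h1 := hcross (-δ) ⟨le_refl _, by linarith⟩
    have h2 := abs_le.mp h1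
    have h3 := abs_le.mp hx3
    simp only [hf]
    linarith [h2.1, h2.2, h3.1, h3.2, hvm]
  have hIVT := intermediate_value_Icc' (by linarith : -δ ≤ δ) hfc
  obtain ⟨t, ht, hft⟩ := hIVT ⟨hfδ, hfmδ⟩
  refine ⟨t, ht, ?_⟩
  have hft' : x.2.2 - (γ t).2.2 - ((γ t).1 * x.2.1 - (γ t).2.1 * x.1) = 0 := hft
  have h3 : (hmul (hinv (γ t)) x).2.2 = 0 := by
    simp only [hmul, hinv]
    linarith
  calc gaugeV (hmul (hinv (γ t)) x) = 0 := by rw [gaugeV, h3]; simp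
    _ ≤ gaugeH (hmul (hinv (γ t)) x) := Real.sqrt_nonneg _
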